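/- Every real polynomial g(x) of degree at most n can be written uniquely as g(x) = a(x) + x·b(x), where a(x) has degree at most n and satisfies x^n·a(1/x) = a(x), and b(x) has degree at most n−1 and satisfies x^{n-1}·b(1/x) = b(x). -/
import Mathlib


open Polynomial Finset

/-- Unique symmetric decomposition `g = a + x b` of a polynomial of degree at most `n`,
with `a` symmetric with center `n/2` and `b` symmetric with center `(n-1)/2`. -/
theorem stmt_13 (n : ℕ) (g : ℝ[X]) (hg : g.natDegree ≤ n) :
    ∃! ab : ℝ[X] × ℝ[X],
      ab.1.natDegree ≤ n ∧ ab.1.reflect n = ab.1 ∧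
      ab.2.natDegree ≤ n - 1 ∧ ab.2.reflect (n - 1) = ab.2 ∧
      g = ab.1 + X * ab.2 := by
  -- uniqueness core
  have key : ∀ p q p' q' : ℝ[X], p.natDegree ≤ n → p.reflect n = p →
      q.natDegree ≤ n - 1 → q.reflect (n-1) = q → g = p + X*q →
      p'.natDegree ≤ n → p'.reflect n = p' →
      q'.natDegree ≤ n - 1 → q'.reflect (n-1) = q' → g = p' + X*q' →
      p = p' ∧ q = q' := by
    intro p q p' q' hpd hps hqd hqs hpq hpd' hps' hqd' hqs' hpq'
    have sym : ∀ (r : ℝ[X]) (m : ℕ), r.reflect m = r → ∀ k ≤ m,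
        r.coeff (m - k) = r.coeff k := by
      intro r m hr k hk
      conv_rhs => rw [← hr]
      rw [coeff_reflect, revAt_le hk]
    have hcoeff : ∀ k, p.coeff (k+1) + q.coeff k = p'.coeff (k+1) + q'.coeff k := by
      intro k
      have h1 := congrArg (fun f : ℝ[X] => f.coeff (k+1)) hpq
      have h2 := congrArg (fun f : ℝ[X] => f.coeff (k+1)) hpq'
      simp only [coeff_add, coeff_X_mul] at h1 h2
      linarith
    have h0 : p.coeff 0 = p'.coeff 0 := by
      have h1 := congrArg (fun f : ℝ[X] => f.coeff 0) hpq
      have h2 := congrArg (fun f : ℝ[X] => f.coeff 0) hpq'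
      simp only [coeff_add, mul_coeff_zero, coeff_X_zero, zero_mul, add_zero] at h1 h2
      linarith
    have main : ∀ k, k ≤ n → p.coeff k = p'.coeff k := by
      intro k
      induction k with
      | zero => exact fun _ => h0
      | succ k ih =>
        intro hk
        have hkn : k ≤ n := by omega
        have hkn1 : k ≤ n - 1 := by omega
        have hq : q.coeff k = q'.coeff k := by
          have hm := hcoeff (n - (k+1))
          have e1 : n - (k+1) + 1 = n - k := by omega
          have e2 : n - (k+1) = (n-1) - k := by omega
          rw [e1, e2] at hm
          rw [sym p n hps k hkn, sym p' n hps' k hkn, sym q (n-1) hqs k hkn1,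
            sym q' (n-1) hqs' k hkn1] at hm
          have := ih hkn
          linarith
        have := hcoeff k
        linarith
    have hp : p = p' := by
      ext k
      by_cases hk : k ≤ n
      · exact main k hk
      · rw [coeff_eq_zero_of_natDegree_lt (lt_of_le_of_lt hpd (by omega)),
          coeff_eq_zero_of_natDegree_lt (lt_of_le_of_lt hpd' (by omega))]
    refine ⟨hp, ?_⟩
    have h := hpq.symm.trans hpq'
    rw [hp] at h
    exact mul_left_cancel₀ X_ne_zero (add_left_cancel h)
  -- construction
  set S : ℕ → ℝ := fun k => ∑ j ∈ Finset.range k, g.coeff j with hSdef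
  set A : ℕ → ℝ := fun k => S (k+1) - S (n+1) + S (n+1-k) with hAdef
  set B : ℕ → ℝ := fun k => S (n+1) - S (n-k) - S (k+1) with hBdef
  set a : ℝ[X] := ∑ k ∈ Finset.range (n+1), Polynomial.monomial k (A k) with hadef
  set b : ℝ[X] := ∑ k ∈ Finset.range n, Polynomial.monomial k (B k) with hbdef
  have ha_coeff : ∀ i, a.coeff i = if i < n+1 then A i else 0 := by
    intro i
    rw [hadef, finset_sum_coeff]
    simp only [coeff_monomial]
    rw [Finset.sum_ite_eq' (Finset.range (n+1)) i A]; simp [Finset.mem_range]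
  have hb_coeff : ∀ i, b.coeff i = if i < n then B i else 0 := by
    intro i
    rw [hbdef, finset_sum_coeff]
    simp only [coeff_monomial]
    rw [Finset.sum_ite_eq' (Finset.range n) i B]; simp [Finset.mem_range]
  have had : a.natDegree ≤ n := by
    rw [natDegree_le_iff_coeff_eq_zero]
    intro N hN
    rw [ha_coeff, if_neg (by omega)]
  have hbd : b.natDegree ≤ n - 1 := by
    rw [natDegree_le_iff_coeff_eq_zero]
    intro N hN
    rw [hb_coeff, if_neg (by omega)]
  have has : a.reflect n = a := by
    ext i
    rw [coeff_reflect]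
    by_cases hi : i ≤ n
    · rw [revAt_le hi, ha_coeff, ha_coeff, if_pos (by omega), if_pos (by omega)]
      have e1 : n + 1 - (n - i) = i + 1 := by omega
      have e2 : n - i + 1 = n + 1 - i := by omega
      simp only [hAdef]
      rw [e1, e2]
      ring
    · rw [revAt_eq_self_of_lt (by omega)]
  have hbs : b.reflect (n-1) = b := by
    ext i
    rw [coeff_reflect]
    by_cases hi : i ≤ n - 1
    · rw [revAt_le hi, hb_coeff, hb_coeff]
      rcases Nat.eq_zero_or_pos n with hn | hn
      · simp [hn]
      · rw [if_pos (by omega), if_pos (by omega)]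
        have e1 : n - (n - 1 - i) = i + 1 := by omega
        have e2 : n - 1 - i + 1 = n - i := by omega
        simp only [hBdef]
        rw [e1, e2]
        ring
    · rw [revAt_eq_self_of_lt (by omega)]
  have heq : g = a + X * b := by
    ext i
    rw [coeff_add]
    cases i with
    | zero =>
      rw [ha_coeff, if_pos (by omega), mul_coeff_zero, coeff_X_zero, zero_mul, add_zero]
      simp only [hAdef]
      have e0 : n + 1 - 0 = n + 1 := by omega
      rw [e0]
      have : S 1 = g.coeff 0 := by simp [hSdef]
      linarith
    | succ k =>
      rw [coeff_X_mul, ha_coeff, hb_coeff]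
      by_cases hk : k + 1 <= n
      · rw [if_pos (by omega), if_pos (by omega)]
        simp only [hAdef, hBdef]
        have e1 : n + 1 - (k+1) = n - k := by omega
        rw [e1]
        have : S (k+1+1) - S (k+1) = g.coeff (k+1) := by
          simp [hSdef, Finset.sum_range_succ]
        linarith
      · rw [if_neg (by omega), if_neg (by omega), add_zero]
        exact coeff_eq_zero_of_natDegree_lt (by omega)
  refine ⟨(a, b), ⟨had, has, hbd, hbs, heq⟩, ?_⟩
  rintro ⟨p, q⟩ ⟨hpd, hps, hqd, hqs, hpq⟩
  obtain ⟨h1, h2⟩ := key p q a b hpd hps hqd hqs hpq had has hbd hbs heq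
  simp [Prod.ext_iff, h1, h2]
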